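/- Let {γ_n}_{n≥0} be a sequence of real numbers with limsup_{n→∞} |γ_n|^{1/n} < ∞. The following are equivalent: (i) {γ_n} is PD; (ii) for every θ ∈ ℝ the sequence {θⁿγ_n}_{n≥0} is CPD; (iii) zero is an accumulation point of the set of all θ ∈ ℝ∖{0} for which {θⁿγ_n}_{n≥0} is CPD; (iv) there exists θ ∈ ℝ∖{0} such that |θ|·limsup_{n→∞}|γ_n|^{1/n} < 1 and {θⁿγ_n}_{n≥0} is CPD. -/

import Mathlib

open MeasureTheory Filter Topology
open scoped ComplexOrder

noncomputable section

/-- A real sequence `γ` is *conditionally positive definite* (CPD) if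
`∑_{i,j=0}^k γ_{i+j} λ_i conj(λ_j) ≥ 0` for all finite sequences `λ_0, …, λ_k` of complex
numbers with `∑_{i=0}^k λ_i = 0`. -/
def IsCPDSeq (γ : ℕ → ℝ) : Prop :=
  ∀ (k : ℕ) (l : ℕ → ℂ), ∑ i ∈ Finset.range (k + 1), l i = 0 →
    0 ≤ ∑ i ∈ Finset.range (k + 1), ∑ j ∈ Finset.range (k + 1),
        (γ (i + j) : ℂ) * l i * (starRingEnd ℂ) (l j)

/-- A real sequence `γ` is *positive definite* (PD) if
`∑_{i,j=0}^k γ_{i+j} λ_i conj(λ_j) ≥ 0` for all finite sequences `λ_0, …, λ_k ∈ ℂ`. -/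
def IsPDSeq (γ : ℕ → ℝ) : Prop :=
  ∀ (k : ℕ) (l : ℕ → ℂ),
    0 ≤ ∑ i ∈ Finset.range (k + 1), ∑ j ∈ Finset.range (k + 1),
        (γ (i + j) : ℂ) * l i * (starRingEnd ℂ) (l j)

/-- The polynomial `Q_n`: `Q_n(x) = 0` for `n = 0, 1` and
`Q_n(x) = ∑_{j=0}^{n-2} (n - j - 1) x^j` for `n ≥ 2`. -/
def Qpoly (n : ℕ) (x : ℝ) : ℝ :=
  ∑ j ∈ Finset.range (n - 1), ((n : ℝ) - (j : ℝ) - 1) * x ^ j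

/-- `(b, c, ν)` is a representing triplet of the sequence `γ`: `b ∈ ℝ`, `c ≥ 0`, `ν` a finite
compactly supported Borel measure on `ℝ` with `ν({1}) = 0`, and
`γ_n = γ_0 + b n + c n² + ∫ Q_n dν` for all `n`. -/
def IsRepTriplet (γ : ℕ → ℝ) (b c : ℝ) (ν : Measure ℝ) : Prop :=
  0 ≤ c ∧ IsFiniteMeasure ν ∧ (∃ K : Set ℝ, IsCompact K ∧ ν Kᶜ = 0) ∧
    ν ({1} : Set ℝ) = 0 ∧
    ∀ n : ℕ, γ n = γ 0 + b * n + c * (n : ℝ) ^ 2 + ∫ x, Qpoly n x ∂ν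

/-- The sequence `n ↦ |γ_n|^{1/n}`. -/
def rootSeq (γ : ℕ → ℝ) : ℕ → ℝ := fun n => |γ n| ^ ((1 : ℝ) / n)

/-- `limsup_{n → ∞} |γ_n|^{1/n} < ∞`, i.e. the sequence `|γ_n|^{1/n}` is (eventually)
bounded above. -/
def FiniteExpGrowth (γ : ℕ → ℝ) : Prop :=
  IsBoundedUnder (· ≤ ·) atTop (rootSeq γ)

/-- `limsup_{n → ∞} |γ_n|^{1/n}` (as a real number). -/
def limsupRoot (γ : ℕ → ℝ) : ℝ := limsup (rootSeq γ) atTop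

/-- The closed support of a Borel measure on `ℝ`: the set of points all of whose open
neighbourhoods have nonzero measure. -/
def measSupport (ν : Measure ℝ) : Set ℝ :=
  {x : ℝ | ∀ U : Set ℝ, IsOpen U → x ∈ U → ν U ≠ 0}

/-- The difference transformation `Δ`, `(Δγ)_n = γ_{n+1} - γ_n`. -/
def deltaSeq (γ : ℕ → ℝ) : ℕ → ℝ := fun n => γ (n + 1) - γ n

set_option maxHeartbeats 1000000

private lemma pd_scale {γ : ℕ → ℝ} (h : IsPDSeq γ) (θ : ℝ) :
    IsPDSeq fun n => θ ^ n * γ n := by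
  intro k l
  have H := h k (fun i => (θ : ℂ) ^ i * l i)
  convert H using 1
  refine Finset.sum_congr rfl fun i _ => Finset.sum_congr rfl fun j _ => ?_
  simp only [map_mul, map_pow, Complex.conj_ofReal]
  push_cast
  ring

private lemma pd_unscale {γ : ℕ → ℝ} {θ : ℝ} (hθ : θ ≠ 0)
    (h : IsPDSeq fun n => θ ^ n * γ n) : IsPDSeq γ := by
  intro k l
  have hθC : (θ : ℂ) ≠ 0 := by exact_mod_cast hθ
  have H := h k (fun i => ((θ : ℂ)⁻¹) ^ i * l i)
  convert H using 1
  refine Finset.sum_congr rfl fun i _ => Finset.sum_congr rfl fun j _ => ?_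
  simp only [map_mul, map_pow, map_inv₀, Complex.conj_ofReal]
  push_cast
  field_simp
  have h1 : (θ : ℂ) ^ i * (θ : ℂ)⁻¹ ^ i = 1 := by rw [← mul_pow, mul_inv_cancel₀ hθC, one_pow]
  have h2 : (θ : ℂ) ^ j * (θ : ℂ)⁻¹ ^ j = 1 := by rw [← mul_pow, mul_inv_cancel₀ hθC, one_pow]
  linear_combination (-((γ (i + j) : ℂ) * l i * (starRingEnd ℂ) (l j) * ((θ : ℂ) ^ j * (θ : ℂ)⁻¹ ^ j))) * h1 - ((γ (i + j) : ℂ) * l i * (starRingEnd ℂ) (l j)) * h2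

private lemma cpd_of_pd {γ : ℕ → ℝ} (h : IsPDSeq γ) : IsCPDSeq γ := fun k l _ => h k l

private lemma pd_of_cpd_tendsto {δ : ℕ → ℝ} (hc : IsCPDSeq δ)
    (h0 : Tendsto δ atTop (𝓝 0)) : IsPDSeq δ := by
  intro k l
  set S : ℂ := ∑ i ∈ Finset.range (k + 1), l i with hS
  set Q : ℂ := ∑ i ∈ Finset.range (k + 1), ∑ j ∈ Finset.range (k + 1),
        (δ (i + j) : ℂ) * l i * (starRingEnd ℂ) (l j) with hQ
  set F : ℕ → ℂ := fun m => Q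
      + (∑ i ∈ Finset.range (k + 1), (δ (i + m) : ℂ) * l i * (starRingEnd ℂ) (-S))
      + (∑ j ∈ Finset.range (k + 1), (δ (m + j) : ℂ) * (-S) * (starRingEnd ℂ) (l j))
      + (δ (m + m) : ℂ) * (-S) * (starRingEnd ℂ) (-S) with hF
  have key : ∀ m, k + 1 ≤ m → 0 ≤ F m := by
    intro m hm
    set l' : ℕ → ℂ := fun i => if i < k + 1 then l i else if i = m then -S else 0 with hl'
    have hmem : m ∉ Finset.range (k + 1) := by simp; omega
    have hsub : insert m (Finset.range (k + 1)) ⊆ Finset.range (m + 1) := by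
      intro x hx; simp at hx ⊢; rcases hx with h | h <;> omega
    have hzero : ∀ i, i ∉ insert m (Finset.range (k + 1)) → l' i = 0 := by
      intro i hi; simp at hi
      simp only [hl', if_neg, hi.2]
      rw [if_neg (by omega), if_neg hi.1]
    have hl'm : l' m = -S := by simp only [hl']; rw [if_neg (by omega)]; simp
    have hl'eq : ∀ i ∈ Finset.range (k + 1), l' i = l i := by
      intro i hi; simp at hi; simp [hl', hi]
    have hsum0 : ∑ i ∈ Finset.range (m + 1), l' i = 0 := by
      rw [← Finset.sum_subset hsub (fun x _ hx => hzero x hx),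
        Finset.sum_insert hmem, hl'm, Finset.sum_congr rfl hl'eq, ← hS]
      ring
    have H := hc m l' hsum0
    have hEq : ∑ i ∈ Finset.range (m + 1), ∑ j ∈ Finset.range (m + 1),
        (δ (i + j) : ℂ) * l' i * (starRingEnd ℂ) (l' j) = F m := by
      have inner : ∀ i, ∑ j ∈ Finset.range (m + 1),
          (δ (i + j) : ℂ) * l' i * (starRingEnd ℂ) (l' j)
          = ∑ j ∈ insert m (Finset.range (k + 1)),
          (δ (i + j) : ℂ) * l' i * (starRingEnd ℂ) (l' j) := by
        intro i
        refine (Finset.sum_subset hsub fun x _ hx => ?_).symm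
        rw [hzero x hx]; simp
      have outer : ∑ i ∈ Finset.range (m + 1), ∑ j ∈ insert m (Finset.range (k + 1)),
          (δ (i + j) : ℂ) * l' i * (starRingEnd ℂ) (l' j)
          = ∑ i ∈ insert m (Finset.range (k + 1)), ∑ j ∈ insert m (Finset.range (k + 1)),
          (δ (i + j) : ℂ) * l' i * (starRingEnd ℂ) (l' j) := by
        refine (Finset.sum_subset hsub fun x _ hx => ?_).symm
        rw [Finset.sum_eq_zero]
        intro j _; rw [hzero x hx]; ring
      rw [Finset.sum_congr rfl fun i _ => inner i, outer]
      rw [Finset.sum_insert hmem, Finset.sum_insert hmem]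
      rw [Finset.sum_congr rfl (fun i (hi : i ∈ Finset.range (k+1)) =>
        Finset.sum_insert hmem (M := ℂ))]
      rw [Finset.sum_add_distrib]
      have e1 : ∑ j ∈ Finset.range (k + 1),
          (δ (m + j) : ℂ) * l' m * (starRingEnd ℂ) (l' j)
          = ∑ j ∈ Finset.range (k + 1), (δ (m + j) : ℂ) * (-S) * (starRingEnd ℂ) (l j) :=
        Finset.sum_congr rfl fun j hj => by rw [hl'm, hl'eq j hj]
      have e2 : ∑ i ∈ Finset.range (k + 1),
          (δ (i + m) : ℂ) * l' i * (starRingEnd ℂ) (l' m)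
          = ∑ i ∈ Finset.range (k + 1), (δ (i + m) : ℂ) * l i * (starRingEnd ℂ) (-S) :=
        Finset.sum_congr rfl fun i hi => by rw [hl'm, hl'eq i hi]
      have e3 : ∑ i ∈ Finset.range (k + 1), ∑ j ∈ Finset.range (k + 1),
          (δ (i + j) : ℂ) * l' i * (starRingEnd ℂ) (l' j) = Q :=
        Finset.sum_congr rfl fun i hi => Finset.sum_congr rfl fun j hj => by
          rw [hl'eq i hi, hl'eq j hj]
      rw [e1, e2, e3, hl'm, hF]
      ring
    rw [← hEq]; exact H
  have hQlim : Tendsto F atTop (𝓝 (Q + 0 + 0 + 0)) := by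
    have hterm : ∀ a : ℕ, Tendsto (fun m => ((δ (a + m) : ℝ) : ℂ)) atTop (𝓝 0) := by
      intro a
      have : Tendsto (fun m => δ (a + m)) atTop (𝓝 0) :=
        h0.comp (tendsto_atTop_mono (fun n => Nat.le_add_left n a) tendsto_id)
      exact (Complex.continuous_ofReal.tendsto 0).comp this
    refine ((Tendsto.add (Tendsto.add (tendsto_const_nhds.add ?_) ?_) ?_))
    · have := tendsto_finset_sum (Finset.range (k+1))
        (fun i _ => ((hterm i).mul_const (l i * (starRingEnd ℂ) (-S))))
      simpa [Finset.sum_const_zero, mul_assoc] using this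
    · have : ∀ j : ℕ, Tendsto (fun m => ((δ (m + j) : ℝ) : ℂ)) atTop (𝓝 0) := by
        intro j
        have : Tendsto (fun m => δ (m + j)) atTop (𝓝 0) :=
          h0.comp (tendsto_atTop_mono (fun n => Nat.le_add_right n j) tendsto_id)
        exact (Complex.continuous_ofReal.tendsto 0).comp this
      have := tendsto_finset_sum (Finset.range (k+1))
        (fun j _ => ((this j).mul_const ((-S) * (starRingEnd ℂ) (l j))))
      simpa [Finset.sum_const_zero, mul_assoc] using this
    · have h2 : Tendsto (fun m => ((δ (m + m) : ℝ) : ℂ)) atTop (𝓝 0) := by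
        have hmm : Tendsto (fun m : ℕ => m + m) atTop atTop :=
          tendsto_atTop_mono (f := id) (fun n => Nat.le_add_right n n) tendsto_id
        have : Tendsto (fun m : ℕ => δ (m + m)) atTop (𝓝 0) := h0.comp hmm
        exact (Complex.continuous_ofReal.tendsto 0).comp this
      simpa [mul_assoc] using h2.mul_const ((-S) * (starRingEnd ℂ) (-S))
  have : (0:ℂ) ≤ Q + 0 + 0 + 0 :=
    ge_of_tendsto hQlim (eventually_atTop.2 ⟨k + 1, key⟩)
  simpa using this

private lemma scaled_tendsto {γ : ℕ → ℝ} (hg : FiniteExpGrowth γ) {θ : ℝ} (hθ : θ ≠ 0)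
    (hlt : |θ| * limsupRoot γ < 1) :
    Tendsto (fun n => θ ^ n * γ n) atTop (𝓝 0) := by
  have hθ0 : 0 < |θ| := abs_pos.mpr hθ
  set L := limsupRoot γ with hLdef
  have hL0 : 0 ≤ L :=
    le_limsup_of_frequently_le
      (Frequently.of_forall fun n => Real.rpow_nonneg (abs_nonneg _) _) hg
  set r : ℝ := (|θ| * L + 1) / 2 with hrdef
  have hrL : |θ| * L < r := by rw [hrdef]; linarith
  have hr1 : r < 1 := by rw [hrdef]; linarith
  have hr0 : 0 < r := by positivity
  have hev : ∀ᶠ n in atTop, rootSeq γ n < r / |θ| := by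
    refine eventually_lt_of_limsup_lt ?_ hg
    have : L < r / |θ| := by rw [lt_div_iff₀ hθ0, mul_comm]; exact hrL
    exact this
  have hbound : ∀ᶠ n in atTop, ‖θ ^ n * γ n‖ ≤ r ^ n := by
    filter_upwards [hev, eventually_ge_atTop 1] with n hn hn1
    have hnR : (0:ℝ) < (n : ℝ) := by exact_mod_cast hn1
    have ha0 : 0 ≤ rootSeq γ n := Real.rpow_nonneg (abs_nonneg _) _
    have hpow : (rootSeq γ n) ^ (n : ℝ) ≤ (r / |θ|) ^ (n : ℝ) :=
      Real.rpow_le_rpow ha0 hn.le (le_of_lt hnR)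
    have hval : (rootSeq γ n) ^ (n : ℝ) = |γ n| := by
      show (|γ n| ^ ((1:ℝ)/n)) ^ (n : ℝ) = |γ n|
      rw [← Real.rpow_mul (abs_nonneg _), one_div, inv_mul_cancel₀ (ne_of_gt hnR),
        Real.rpow_one]
    have h1 : |γ n| ≤ (r / |θ|) ^ n := by
      rw [← Real.rpow_natCast (r / |θ|) n, ← hval]; exact hpow
    have : ‖θ ^ n * γ n‖ = |θ| ^ n * |γ n| := by
      rw [Real.norm_eq_abs, abs_mul, abs_pow]
    rw [this]
    calc |θ| ^ n * |γ n| ≤ |θ| ^ n * (r / |θ|) ^ n := by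
          exact mul_le_mul_of_nonneg_left h1 (pow_nonneg (abs_nonneg _) n)
      _ = (|θ| * (r / |θ|)) ^ n := (mul_pow _ _ n).symm
      _ = r ^ n := by rw [mul_div_cancel₀ _ (ne_of_gt hθ0)]
  exact squeeze_zero_norm' hbound (tendsto_pow_atTop_nhds_zero_of_lt_one hr0.le hr1)

private lemma small_theta {γ : ℕ → ℝ} {θ : ℝ} (h : |θ| < 1 / (|limsupRoot γ| + 1)) :
    |θ| * limsupRoot γ < 1 := by
  have h1 : (0:ℝ) < |limsupRoot γ| + 1 := by positivity
  have h2 : |θ| * limsupRoot γ ≤ |θ| * |limsupRoot γ| :=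
    mul_le_mul_of_nonneg_left (le_abs_self _) (abs_nonneg _)
  have h3 : |θ| * |limsupRoot γ| < 1 := by
    calc |θ| * |limsupRoot γ| ≤ |θ| * (|limsupRoot γ| + 1) := by
          exact mul_le_mul_of_nonneg_left (by linarith) (abs_nonneg _)
      _ < (1 / (|limsupRoot γ| + 1)) * (|limsupRoot γ| + 1) := by
          exact mul_lt_mul_of_pos_right h h1
      _ = 1 := by field_simp
  linarith

/-- Theorem `Gyeon`: for a real sequence `γ` with `limsup |γ_n|^{1/n} < ∞` the following are
equivalent: (i) `γ` is PD; (ii) `{θⁿ γ_n}ₙ` is CPD for every `θ ∈ ℝ`; (iii) `0` is an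
accumulation point of the set of `θ ∈ ℝ \ {0}` for which `{θⁿ γ_n}ₙ` is CPD; (iv) there is
`θ ∈ ℝ \ {0}` with `|θ| · limsup |γ_n|^{1/n} < 1` such that `{θⁿ γ_n}ₙ` is CPD. -/
theorem pd_iff_scaled_cpd (γ : ℕ → ℝ) (hg : FiniteExpGrowth γ) :
    (IsPDSeq γ ↔ ∀ θ : ℝ, IsCPDSeq fun n => θ ^ n * γ n) ∧
    ((∀ θ : ℝ, IsCPDSeq fun n => θ ^ n * γ n) ↔
      (0 : ℝ) ∈ closure {θ : ℝ | θ ≠ 0 ∧ IsCPDSeq fun n => θ ^ n * γ n}) ∧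
    ((0 : ℝ) ∈ closure {θ : ℝ | θ ≠ 0 ∧ IsCPDSeq fun n => θ ^ n * γ n} ↔
      ∃ θ : ℝ, θ ≠ 0 ∧ |θ| * limsupRoot γ < 1 ∧ IsCPDSeq fun n => θ ^ n * γ n) := by
  have hAB : IsPDSeq γ → ∀ θ : ℝ, IsCPDSeq fun n => θ ^ n * γ n :=
    fun h θ => cpd_of_pd (pd_scale h θ)
  have hDA : ∀ θ : ℝ, θ ≠ 0 → |θ| * limsupRoot γ < 1 →
      (IsCPDSeq fun n => θ ^ n * γ n) → IsPDSeq γ := fun θ hθ hlt hc =>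
    pd_unscale hθ (pd_of_cpd_tendsto hc (scaled_tendsto hg hθ hlt))
  have hBC : (∀ θ : ℝ, IsCPDSeq fun n => θ ^ n * γ n) →
      (0 : ℝ) ∈ closure {θ : ℝ | θ ≠ 0 ∧ IsCPDSeq fun n => θ ^ n * γ n} := by
    intro hB
    refine mem_closure_of_tendsto tendsto_one_div_add_atTop_nhds_zero_nat
      (Eventually.of_forall fun n => ?_)
    exact ⟨ne_of_gt (by positivity), hB _⟩
  have hCD : (0 : ℝ) ∈ closure {θ : ℝ | θ ≠ 0 ∧ IsCPDSeq fun n => θ ^ n * γ n} →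
      ∃ θ : ℝ, θ ≠ 0 ∧ |θ| * limsupRoot γ < 1 ∧ IsCPDSeq fun n => θ ^ n * γ n := by
    intro hC
    rw [Metric.mem_closure_iff] at hC
    obtain ⟨θ, hθmem, hdist⟩ := hC (1 / (|limsupRoot γ| + 1)) (by positivity)
    have habs : |θ| < 1 / (|limsupRoot γ| + 1) := by
      rw [Real.dist_eq] at hdist; simpa using hdist
    exact ⟨θ, hθmem.1, small_theta habs, hθmem.2⟩
  refine ⟨⟨hAB, fun hB => ?_⟩, ⟨hBC, fun hC => ?_⟩, ⟨hCD, fun hD => ?_⟩⟩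
  · obtain ⟨θ, h1, h2, h3⟩ := hCD (hBC hB)
    exact hDA θ h1 h2 h3
  · obtain ⟨θ, h1, h2, h3⟩ := hCD hC
    exact hAB (hDA θ h1 h2 h3)
  · obtain ⟨θ, h1, h2, h3⟩ := hD
    exact hBC (hAB (hDA θ h1 h2 h3))

end
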